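/- Suppose $f : \mathbb{R}^2 \to \mathbb{R}$ is $C^2$ and for all $r \le s$ in $\mathbb{R}^2$, the Aumann-Shapley attribution to the second variable along the diagonal path equals the Shapley-Shubik attribution: $\int_0^1 \partial_2 f((1-t)r + ts)(s_2 - r_2)\,dt = \frac{1}{2}[f(s_1,s_2) - f(s_1,r_2)] + \frac{1}{2}[f(r_1,s_2) - f(r_1,r_2)]$. Then $\partial_1\partial_2 f$ is constant, i.e., $f(x_1, x_2) = c\, x_1 x_2 + g_1(x_1) + g_2(x_2)$ for some constant $c$ and functions $g_1, g_2$. -/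

import Mathlib

open intervalIntegral MeasureTheory

noncomputable def asD2 (f : ℝ × ℝ → ℝ) : ℝ × ℝ → ℝ := fun p => fderiv ℝ f p (0, 1)
noncomputable def asH (f : ℝ × ℝ → ℝ) : ℝ × ℝ → ℝ := fun p => fderiv ℝ (asD2 f) p (1, 0)

noncomputable def asJ (f : ℝ × ℝ → ℝ) (a c w v : ℝ) : ℝ :=
  ∫ t in (0:ℝ)..1, ∫ u in a..a + w, asH f (u, c + v * t)

noncomputable def asI (f : ℝ × ℝ → ℝ) (a c w v : ℝ) : ℝ :=
  ∫ t in (0:ℝ)..1, ∫ u in a..a + w * t, asH f (u, c + v * t)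

variable {f : ℝ × ℝ → ℝ}

lemma asD2_contDiff (hf : ContDiff ℝ 2 f) : ContDiff ℝ 1 (asD2 f) :=
  (hf.fderiv_right (by norm_num)).clm_apply contDiff_const

lemma asD2_continuous (hf : ContDiff ℝ 2 f) : Continuous (asD2 f) :=
  (asD2_contDiff hf).continuous

lemma asH_continuous (hf : ContDiff ℝ 2 f) : Continuous (asH f) := by
  have h0 : ContDiff ℝ 0 (fderiv ℝ (asD2 f)) :=
    (asD2_contDiff hf).fderiv_right (by norm_num)
  exact (contDiff_zero.mp h0).clm_apply continuous_const

lemma hasDerivAt_snd (hf : ContDiff ℝ 2 f) (x y : ℝ) :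
    HasDerivAt (fun y => f (x, y)) (asD2 f (x, y)) y := by
  have hcurve : HasDerivAt (fun y : ℝ => (x, y)) ((0 : ℝ), (1 : ℝ)) y :=
    (hasDerivAt_const y x).prodMk (hasDerivAt_id y)
  exact ((hf.differentiable (by norm_num) (x, y)).hasFDerivAt).comp_hasDerivAt y hcurve

lemma hasDerivAt_D2x (hf : ContDiff ℝ 2 f) (x y : ℝ) :
    HasDerivAt (fun x => asD2 f (x, y)) (asH f (x, y)) x := by
  have hcurve : HasDerivAt (fun x : ℝ => (x, y)) ((1 : ℝ), (0 : ℝ)) x :=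
    (hasDerivAt_id x).prodMk (hasDerivAt_const x y)
  exact (((asD2_contDiff hf).differentiable (by norm_num) (x, y)).hasFDerivAt).comp_hasDerivAt x hcurve

lemma D2_sub (hf : ContDiff ℝ 2 f) (a b y : ℝ) :
    asD2 f (b, y) - asD2 f (a, y) = ∫ u in a..b, asH f (u, y) := by
  refine (integral_eq_sub_of_hasDerivAt (fun u _ => hasDerivAt_D2x hf u y) ?_).symm
  exact ((asH_continuous hf).comp (continuous_id.prodMk continuous_const)).intervalIntegrable a b

/-- FTC along a vertical segment, in `t ∈ [0,1]` form. -/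
lemma f_sub' (hf : ContDiff ℝ 2 f) (x c v : ℝ) :
    f (x, c + v) - f (x, c) = ∫ t in (0:ℝ)..1, asD2 f (x, c + v * t) * v := by
  have hder : ∀ t : ℝ, HasDerivAt (fun t => f (x, c + v * t)) (asD2 f (x, c + v * t) * v) t := by
    intro t
    have h1 : HasDerivAt (fun t : ℝ => c + v * t) v t := by
      simpa using ((hasDerivAt_id t).const_mul v).const_add c
    exact (hasDerivAt_snd hf x (c + v * t)).comp t h1
  have hint : IntervalIntegrable (fun t => asD2 f (x, c + v * t) * v) volume 0 1 := by
    apply Continuous.intervalIntegrable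
    exact (((asD2_continuous hf).comp (continuous_const.prodMk (by continuity))).mul continuous_const)
  have := integral_eq_sub_of_hasDerivAt (fun t (_ : t ∈ Set.uIcc (0:ℝ) 1) => hder t) hint
  simp only [mul_one, mul_zero, add_zero] at this
  linarith [this]

lemma contParamI (hf : ContDiff ℝ 2 f) (a c w v : ℝ) :
    Continuous fun t : ℝ => ∫ u in a..a + w * t, asH f (u, c + v * t) := by
  apply intervalIntegral.continuous_parametric_intervalIntegral_of_continuous
    (f := fun t u => asH f (u, c + v * t)) (s := fun t => a + w * t)
  · exact (asH_continuous hf).comp (continuous_snd.prodMk (by continuity))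
  · continuity

lemma contParamJ (hf : ContDiff ℝ 2 f) (a c w v : ℝ) :
    Continuous fun t : ℝ => ∫ u in a..a + w, asH f (u, c + v * t) := by
  apply intervalIntegral.continuous_parametric_intervalIntegral_of_continuous
    (f := fun t u => asH f (u, c + v * t)) (s := fun _ => a + w)
  · exact (asH_continuous hf).comp (continuous_snd.prodMk (by continuity))
  · continuity

/-- Step 1: the AS=SS hypothesis implies triangle = half rectangle. -/
lemma step1 (hf : ContDiff ℝ 2 f)
    (h : ∀ r1 r2 s1 s2 : ℝ, r1 ≤ s1 → r2 ≤ s2 →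
      (∫ t in (0:ℝ)..1,
          deriv (fun y => f ((1 - t) * r1 + t * s1, y))
            ((1 - t) * r2 + t * s2) * (s2 - r2)) =
        (f (s1, s2) - f (s1, r2)) / 2 + (f (r1, s2) - f (r1, r2)) / 2)
    (a c w v : ℝ) (hw : 0 ≤ w) (hv : 0 ≤ v) :
    v * asI f a c w v = (v / 2) * asJ f a c w v := by
  have h0 := h a c (a + w) (c + v) (by linarith) (by linarith)
  -- rewrite LHS of h0
  have hL : (∫ t in (0:ℝ)..1,
          deriv (fun y => f ((1 - t) * a + t * (a + w), y))
            ((1 - t) * c + t * (c + v)) * ((c + v) - c)) =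
      ∫ t in (0:ℝ)..1, (asD2 f (a, c + v * t) * v
        + v * ∫ u in a..a + w * t, asH f (u, c + v * t)) := by
    apply intervalIntegral.integral_congr
    intro t _
    dsimp only
    have e1 : (1 - t) * a + t * (a + w) = a + w * t := by ring
    have e2 : (1 - t) * c + t * (c + v) = c + v * t := by ring
    rw [e1, e2, (hasDerivAt_snd hf (a + w * t) (c + v * t)).deriv]
    have e3 : asD2 f (a + w * t, c + v * t)
        = asD2 f (a, c + v * t) + ∫ u in a..a + w * t, asH f (u, c + v * t) := by
      have := D2_sub hf a (a + w * t) (c + v * t)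
      linarith
    rw [e3]; ring
  rw [hL] at h0
  have hint1 : IntervalIntegrable (fun t => asD2 f (a, c + v * t) * v) volume 0 1 :=
    (((asD2_continuous hf).comp (continuous_const.prodMk (by continuity))).mul
      continuous_const).intervalIntegrable 0 1
  have hint2 : IntervalIntegrable
      (fun t => v * ∫ u in a..a + w * t, asH f (u, c + v * t)) volume 0 1 :=
    (continuous_const.mul (contParamI hf a c w v)).intervalIntegrable 0 1
  rw [intervalIntegral.integral_add hint1 hint2, intervalIntegral.integral_const_mul] at h0
  -- rewrite RHS of h0
  have hR1 : f (a + w, c + v) - f (a + w, c)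
      = ∫ t in (0:ℝ)..1, asD2 f (a + w, c + v * t) * v := f_sub' hf (a + w) c v
  have hR2 : f (a, c + v) - f (a, c)
      = ∫ t in (0:ℝ)..1, asD2 f (a, c + v * t) * v := f_sub' hf a c v
  rw [hR1, hR2] at h0
  have hR3 : (∫ t in (0:ℝ)..1, asD2 f (a + w, c + v * t) * v)
      = (∫ t in (0:ℝ)..1, asD2 f (a, c + v * t) * v)
        + v * asJ f a c w v := by
    rw [asJ, ← intervalIntegral.integral_const_mul]
    rw [← intervalIntegral.integral_add hint1
      (show IntervalIntegrable (fun t => v * ∫ u in a..a + w, asH f (u, c + v * t)) volume 0 1 from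
        (continuous_const.mul (contParamJ hf a c w v)).intervalIntegrable 0 1)]
    apply intervalIntegral.integral_congr
    intro t _
    dsimp only
    rw [show asD2 f (a + w, c + v * t)
        = asD2 f (a, c + v * t) + ∫ u in a..a + w, asH f (u, c + v * t) from by
      have := D2_sub hf a (a + w) (c + v * t); linarith]
    ring
  rw [hR3] at h0
  rw [asI]
  linarith

lemma half_split {g : ℝ → ℝ} (hg : Continuous g) :
    (∫ t in (0:ℝ)..1, g t)
      = (1/2) * (∫ t in (0:ℝ)..1, g (2⁻¹ * t + 0)) + (1/2) * (∫ t in (0:ℝ)..1, g (2⁻¹ * t + 2⁻¹)) := by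
  have h1 := integral_comp_mul_add (a := (0:ℝ)) (b := (1:ℝ)) g (show (2:ℝ)⁻¹ ≠ 0 by norm_num) 0
  have h2 := integral_comp_mul_add (a := (0:ℝ)) (b := (1:ℝ)) g (show (2:ℝ)⁻¹ ≠ 0 by norm_num) 2⁻¹
  have h3 := integral_add_adjacent_intervals (μ := volume)
    (hg.intervalIntegrable 0 2⁻¹) (hg.intervalIntegrable 2⁻¹ 1)
  rw [show (2:ℝ)⁻¹ * 0 + 0 = 0 by norm_num, show (2:ℝ)⁻¹ * 1 + 0 = 2⁻¹ by norm_num,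
    show ((2:ℝ)⁻¹)⁻¹ = 2 by norm_num, smul_eq_mul] at h1
  rw [show (2:ℝ)⁻¹ * 0 + 2⁻¹ = 2⁻¹ by norm_num, show (2:ℝ)⁻¹ * 1 + 2⁻¹ = 1 by norm_num,
    show ((2:ℝ)⁻¹)⁻¹ = 2 by norm_num, smul_eq_mul] at h2
  linarith

lemma step2 (hf : ContDiff ℝ 2 f)
    (h : ∀ r1 r2 s1 s2 : ℝ, r1 ≤ s1 → r2 ≤ s2 →
      (∫ t in (0:ℝ)..1,
          deriv (fun y => f ((1 - t) * r1 + t * s1, y))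
            ((1 - t) * r2 + t * s2) * (s2 - r2)) =
        (f (s1, s2) - f (s1, r2)) / 2 + (f (r1, s2) - f (r1, r2)) / 2)
    (a c w v : ℝ) (hw : 0 < w) (hv : 0 < v) :
    asJ f (a + w) c w v = asJ f a (c + v) w v := by
  have hIJ : ∀ a' c' w' v', 0 < w' → 0 < v' →
      asI f a' c' w' v' = asJ f a' c' w' v' / 2 := by
    intro a' c' w' v' hw' hv'
    have h1 := step1 hf h a' c' w' v' hw'.le hv'.le
    have h2 : v' * asI f a' c' w' v' = v' * (asJ f a' c' w' v' / 2) := by linarith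
    exact mul_left_cancel₀ (ne_of_gt hv') h2
  have hintH : ∀ y : ℝ, ∀ p q : ℝ,
      IntervalIntegrable (fun u => asH f (u, y)) volume p q := fun y p q =>
    ((asH_continuous hf).comp (continuous_id.prodMk continuous_const)).intervalIntegrable p q
  have hA : asI f a c (2*w) (2*v)
      = (1/2) * asI f a c w v
        + (1/2) * (asJ f a (c+v) w v + asI f (a+w) (c+v) w v) := by
    have hg : Continuous fun t : ℝ => ∫ u in a..a + 2*w*t, asH f (u, c + 2*v*t) :=
      contParamI hf a c (2*w) (2*v)
    have hs : asI f a c (2*w) (2*v)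
        = (1/2) * (∫ t in (0:ℝ)..1, ∫ u in a..a + 2*w*(2⁻¹*t+0), asH f (u, c + 2*v*(2⁻¹*t+0)))
          + (1/2) * (∫ t in (0:ℝ)..1, ∫ u in a..a + 2*w*(2⁻¹*t+2⁻¹), asH f (u, c + 2*v*(2⁻¹*t+2⁻¹))) :=
      half_split hg
    have c1 : (∫ t in (0:ℝ)..1, ∫ u in a..a + 2*w*(2⁻¹*t+0), asH f (u, c + 2*v*(2⁻¹*t+0)))
        = asI f a c w v := by
      apply integral_congr
      intro t _
      dsimp only
      rw [show a + 2*w*(2⁻¹*t+0) = a + w*t by ring, show c + 2*v*(2⁻¹*t+0) = c + v*t by ring]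
    have c2 : (∫ t in (0:ℝ)..1, ∫ u in a..a + 2*w*(2⁻¹*t+2⁻¹), asH f (u, c + 2*v*(2⁻¹*t+2⁻¹)))
        = asJ f a (c+v) w v + asI f (a+w) (c+v) w v := by
      have e : ∀ t : ℝ, (∫ u in a..a + 2*w*(2⁻¹*t+2⁻¹), asH f (u, c + 2*v*(2⁻¹*t+2⁻¹)))
          = (∫ u in a..a + w, asH f (u, c + v + v*t))
            + ∫ u in a + w..a + w + w*t, asH f (u, c + v + v*t) := by
        intro t
        rw [show a + 2*w*(2⁻¹*t+2⁻¹) = a + w + w*t by ring,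
          show c + 2*v*(2⁻¹*t+2⁻¹) = c + v + v*t by ring]
        exact (integral_add_adjacent_intervals (hintH _ _ _) (hintH _ _ _)).symm
      rw [integral_congr (fun t _ => e t)]
      rw [integral_add ((contParamJ hf a (c+v) w v).intervalIntegrable 0 1)
        ((contParamI hf (a+w) (c+v) w v).intervalIntegrable 0 1)]
      rfl
    rw [hs, c1, c2]
  have hB : asJ f a c (2*w) (2*v)
      = (1/2) * (asJ f a c w v + asJ f (a+w) c w v)
        + (1/2) * (asJ f a (c+v) w v + asJ f (a+w) (c+v) w v) := by
    have hg : Continuous fun t : ℝ => ∫ u in a..a + 2*w, asH f (u, c + 2*v*t) :=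
      contParamJ hf a c (2*w) (2*v)
    have hs : asJ f a c (2*w) (2*v)
        = (1/2) * (∫ t in (0:ℝ)..1, ∫ u in a..a + 2*w, asH f (u, c + 2*v*(2⁻¹*t+0)))
          + (1/2) * (∫ t in (0:ℝ)..1, ∫ u in a..a + 2*w, asH f (u, c + 2*v*(2⁻¹*t+2⁻¹))) :=
      half_split hg
    have c1 : (∫ t in (0:ℝ)..1, ∫ u in a..a + 2*w, asH f (u, c + 2*v*(2⁻¹*t+0)))
        = asJ f a c w v + asJ f (a+w) c w v := by
      have e : ∀ t : ℝ, (∫ u in a..a + 2*w, asH f (u, c + 2*v*(2⁻¹*t+0)))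
          = (∫ u in a..a + w, asH f (u, c + v*t))
            + ∫ u in a + w..a + w + w, asH f (u, c + v*t) := by
        intro t
        rw [show c + 2*v*(2⁻¹*t+0) = c + v*t by ring, show a + 2*w = a + w + w by ring]
        exact (integral_add_adjacent_intervals (hintH _ _ _) (hintH _ _ _)).symm
      rw [integral_congr (fun t _ => e t)]
      rw [integral_add ((contParamJ hf a c w v).intervalIntegrable 0 1)
        ((contParamJ hf (a+w) c w v).intervalIntegrable 0 1)]
      rfl
    have c2 : (∫ t in (0:ℝ)..1, ∫ u in a..a + 2*w, asH f (u, c + 2*v*(2⁻¹*t+2⁻¹)))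
        = asJ f a (c+v) w v + asJ f (a+w) (c+v) w v := by
      have e : ∀ t : ℝ, (∫ u in a..a + 2*w, asH f (u, c + 2*v*(2⁻¹*t+2⁻¹)))
          = (∫ u in a..a + w, asH f (u, c + v + v*t))
            + ∫ u in a + w..a + w + w, asH f (u, c + v + v*t) := by
        intro t
        rw [show c + 2*v*(2⁻¹*t+2⁻¹) = c + v + v*t by ring, show a + 2*w = a + w + w by ring]
        exact (integral_add_adjacent_intervals (hintH _ _ _) (hintH _ _ _)).symm
      rw [integral_congr (fun t _ => e t)]
      rw [integral_add ((contParamJ hf a (c+v) w v).intervalIntegrable 0 1)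
        ((contParamJ hf (a+w) (c+v) w v).intervalIntegrable 0 1)]
      rfl
    rw [hs, c1, c2]
  have h1 := hIJ a c w v hw hv
  have h2 := hIJ (a+w) (c+v) w v hw hv
  have h3 := hIJ a c (2*w) (2*v) (by linarith) (by linarith)
  linarith

lemma step3 (hf : ContDiff ℝ 2 f)
    (h : ∀ r1 r2 s1 s2 : ℝ, r1 ≤ s1 → r2 ≤ s2 →
      (∫ t in (0:ℝ)..1,
          deriv (fun y => f ((1 - t) * r1 + t * s1, y))
            ((1 - t) * r2 + t * s2) * (s2 - r2)) =
        (f (s1, s2) - f (s1, r2)) / 2 + (f (r1, s2) - f (r1, r2)) / 2)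
    (w v : ℝ) (hw : 0 < w) (hv : 0 < v) (n : ℕ) :
    ∀ a c : ℝ, asJ f (a + n*w) c w v = asJ f a (c + n*v) w v := by
  induction n with
  | zero => intro a c; simp
  | succ n ih =>
    intro a c
    have e1 : a + (n+1 : ℕ)*w = (a + w) + n*w := by push_cast; ring
    have e2 : c + (n+1 : ℕ)*v = (c + n*v) + v := by push_cast; ring
    rw [e1, ih (a + w) c, e2]
    exact step2 hf h a (c + n*v) w v hw hv

lemma avg_bound (hf : ContDiff ℝ 2 f) (x y w v ε : ℝ) (hw : 0 < w) (hv : 0 < v)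
    (hcl : ∀ u t : ℝ, u ∈ Set.Icc x (x+w) → t ∈ Set.Icc y (y+v) →
      |asH f (u, t) - asH f (x, y)| ≤ ε) :
    |asJ f x y w v - w * asH f (x, y)| ≤ w * ε := by
  have hintH : ∀ y' p q : ℝ,
      IntervalIntegrable (fun u => asH f (u, y')) volume p q := fun y' p q =>
    ((asH_continuous hf).comp (continuous_id.prodMk continuous_const)).intervalIntegrable p q
  have hεnn : 0 ≤ ε := le_trans (abs_nonneg _) (hcl x y (by constructor <;> linarith) (by constructor <;> linarith))
  have inner : ∀ t : ℝ, (∫ u in x..x+w, (asH f (u, y + v*t) - asH f (x, y)))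
      = (∫ u in x..x+w, asH f (u, y + v*t)) - w * asH f (x, y) := by
    intro t
    rw [intervalIntegral.integral_sub (hintH _ _ _) intervalIntegrable_const,
      intervalIntegral.integral_const]
    simp [smul_eq_mul]
  have outer : asJ f x y w v - w * asH f (x, y)
      = ∫ t in (0:ℝ)..1, ((∫ u in x..x+w, asH f (u, y + v*t)) - w * asH f (x, y)) := by
    rw [intervalIntegral.integral_sub ((contParamJ hf x y w v).intervalIntegrable 0 1)
      intervalIntegrable_const, intervalIntegral.integral_const, asJ]
    simp
  rw [outer]
  have key : ∀ t ∈ Set.uIoc (0:ℝ) 1,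
      ‖(∫ u in x..x+w, asH f (u, y + v*t)) - w * asH f (x, y)‖ ≤ w * ε := by
    intro t ht
    rw [Set.uIoc_of_le (by norm_num : (0:ℝ) ≤ 1)] at ht
    rw [← inner t]
    have hb : ∀ u ∈ Set.uIoc x (x+w), ‖asH f (u, y + v*t) - asH f (x, y)‖ ≤ ε := by
      intro u hu
      rw [Set.uIoc_of_le (by linarith : x ≤ x + w)] at hu
      refine hcl u (y + v*t) ⟨le_of_lt hu.1, hu.2⟩ ⟨?_, ?_⟩
      · nlinarith [ht.1, hv]
      · nlinarith [ht.2, hv]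
    calc ‖∫ u in x..x+w, (asH f (u, y + v*t) - asH f (x, y))‖
        ≤ ε * |x + w - x| := intervalIntegral.norm_integral_le_of_norm_le_const hb
      _ = w * ε := by rw [show x + w - x = w by ring, abs_of_pos hw]; ring
  calc ‖∫ t in (0:ℝ)..1, ((∫ u in x..x+w, asH f (u, y + v*t)) - w * asH f (x, y))‖
      ≤ (w * ε) * |1 - 0| := intervalIntegral.norm_integral_le_of_norm_le_const key
    _ = w * ε := by norm_num

lemma step4 (hf : ContDiff ℝ 2 f)
    (h : ∀ r1 r2 s1 s2 : ℝ, r1 ≤ s1 → r2 ≤ s2 →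
      (∫ t in (0:ℝ)..1,
          deriv (fun y => f ((1 - t) * r1 + t * s1, y))
            ((1 - t) * r2 + t * s2) * (s2 - r2)) =
        (f (s1, s2) - f (s1, r2)) / 2 + (f (r1, s2) - f (r1, r2)) / 2)
    {p1 p2 q1 q2 : ℝ} (h1 : p1 < q1) (h2 : q2 < p2) :
    asH f (p1, p2) = asH f (q1, q2) := by
  have main : ∀ ε : ℝ, 0 < ε → |asH f (p1, p2) - asH f (q1, q2)| ≤ 2 * ε := by
    intro ε hε
    obtain ⟨δ1, hδ1, hp⟩ := Metric.continuousAt_iff.mp ((asH_continuous hf).continuousAt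
      (x := (p1, p2))) ε hε
    obtain ⟨δ2, hδ2, hq⟩ := Metric.continuousAt_iff.mp ((asH_continuous hf).continuousAt
      (x := (q1, q2))) ε hε
    set δ := min δ1 δ2 with hδdef
    have hδ : 0 < δ := lt_min hδ1 hδ2
    obtain ⟨n, hn⟩ := exists_nat_gt (max ((q1 - p1)/δ) ((p2 - q2)/δ))
    have hn1 : ((q1 - p1)/δ) < n := lt_of_le_of_lt (le_max_left _ _) hn
    have hn2 : ((p2 - q2)/δ) < n := lt_of_le_of_lt (le_max_right _ _) hn
    have hnpos : (0:ℝ) < n := lt_of_le_of_lt (div_nonneg (by linarith) hδ.le) hn1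
    set w := (q1 - p1)/n with hwdef
    set v := (p2 - q2)/n with hvdef
    have hw : 0 < w := div_pos (by linarith) hnpos
    have hv : 0 < v := div_pos (by linarith) hnpos
    have hwδ : w < δ := by
      rw [hwdef, div_lt_iff₀ hnpos]
      have := (div_lt_iff₀ hδ).mp hn1
      linarith [mul_comm δ (n:ℝ)]
    have hvδ : v < δ := by
      rw [hvdef, div_lt_iff₀ hnpos]
      have := (div_lt_iff₀ hδ).mp hn2
      linarith [mul_comm δ (n:ℝ)]
    have hkey : asJ f q1 q2 w v = asJ f p1 p2 w v := by
      have := step3 hf h w v hw hv n p1 q2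
      rw [show p1 + n*w = q1 by rw [hwdef]; field_simp; ring,
        show q2 + n*v = p2 by rw [hvdef]; field_simp; ring] at this
      exact this
    have close : ∀ (x y : ℝ) (δ' : ℝ), δ ≤ δ' →
        (∀ z : ℝ × ℝ, dist z (x, y) < δ' → dist (asH f z) (asH f (x, y)) < ε) →
        ∀ u t : ℝ, u ∈ Set.Icc x (x+w) → t ∈ Set.Icc y (y+v) →
          |asH f (u, t) - asH f (x, y)| ≤ ε := by
      intro x y δ' hle hcont u t hu ht
      have hd : dist ((u, t) : ℝ × ℝ) (x, y) < δ' := by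
        rw [Prod.dist_eq]
        have d1 : dist u x < δ' := by
          rw [Real.dist_eq, abs_of_nonneg (by linarith [hu.1])]
          linarith [hu.2, hwδ]
        have d2 : dist t y < δ' := by
          rw [Real.dist_eq, abs_of_nonneg (by linarith [ht.1])]
          linarith [ht.2, hvδ]
        exact max_lt d1 d2
      have := hcont (u, t) hd
      rw [Real.dist_eq] at this
      exact this.le
    have b1 := avg_bound hf p1 p2 w v ε hw hv
      (close p1 p2 δ1 (min_le_left _ _) (fun z hz => hp hz))
    have b2 := avg_bound hf q1 q2 w v ε hw hv
      (close q1 q2 δ2 (min_le_right _ _) (fun z hz => hq hz))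
    rw [hkey] at b2
    have : |w * asH f (p1, p2) - w * asH f (q1, q2)| ≤ 2 * (w * ε) := by
      calc |w * asH f (p1, p2) - w * asH f (q1, q2)|
          = |(w * asH f (p1,p2) - asJ f p1 p2 w v) + (asJ f p1 p2 w v - w * asH f (q1,q2))| := by
            ring_nf
        _ ≤ |w * asH f (p1,p2) - asJ f p1 p2 w v| + |asJ f p1 p2 w v - w * asH f (q1,q2)| :=
            abs_add_le _ _
        _ ≤ 2 * (w * ε) := by
            have e1 : |w * asH f (p1,p2) - asJ f p1 p2 w v|
                = |asJ f p1 p2 w v - w * asH f (p1,p2)| := abs_sub_comm _ _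
            linarith [b1, b2, e1]
    rw [← mul_sub, abs_mul, abs_of_pos hw] at this
    have := (mul_le_mul_iff_right₀ hw).mp (by linarith : w * |asH f (p1,p2) - asH f (q1,q2)| ≤ w * (2*ε))
    linarith
  by_contra hne
  have habs : 0 < |asH f (p1, p2) - asH f (q1, q2)| := abs_pos.mpr (sub_ne_zero.mpr hne)
  have := main (|asH f (p1, p2) - asH f (q1, q2)|/4) (by linarith)
  linarith

lemma step5 (hf : ContDiff ℝ 2 f)
    (h : ∀ r1 r2 s1 s2 : ℝ, r1 ≤ s1 → r2 ≤ s2 →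
      (∫ t in (0:ℝ)..1,
          deriv (fun y => f ((1 - t) * r1 + t * s1, y))
            ((1 - t) * r2 + t * s2) * (s2 - r2)) =
        (f (s1, s2) - f (s1, r2)) / 2 + (f (r1, s2) - f (r1, r2)) / 2)
    (p q : ℝ × ℝ) : asH f p = asH f q := by
  obtain ⟨p1, p2⟩ := p
  obtain ⟨q1, q2⟩ := q
  have z1 : ℝ := 0
  set m1 := max p1 q1 + 1 with hm1
  set m2 := min p2 q2 - 1 with hm2
  have e1 : asH f (p1, p2) = asH f (m1, m2) :=
    step4 hf h (lt_of_le_of_lt (le_max_left _ _) (by linarith))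
      (by have := min_le_left p2 q2; linarith)
  have e2 : asH f (q1, q2) = asH f (m1, m2) :=
    step4 hf h (lt_of_le_of_lt (le_max_right _ _) (by linarith))
      (by have := min_le_right p2 q2; linarith)
  rw [e1, e2]

theorem AS_eq_SS_implies_mixed_partial_constant
    (f : ℝ × ℝ → ℝ) (hf : ContDiff ℝ 2 f)
    (h : ∀ r1 r2 s1 s2 : ℝ, r1 ≤ s1 → r2 ≤ s2 →
      (∫ t in (0:ℝ)..1,
          deriv (fun y => f ((1 - t) * r1 + t * s1, y))
            ((1 - t) * r2 + t * s2) * (s2 - r2)) =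
        (f (s1, s2) - f (s1, r2)) / 2 + (f (r1, s2) - f (r1, r2)) / 2) :
    ∃ (c : ℝ) (g1 g2 : ℝ → ℝ),
      ∀ x1 x2 : ℝ, f (x1, x2) = c * x1 * x2 + g1 x1 + g2 x2 := by
  set c := asH f (0, 0) with hc
  refine ⟨c, fun x => f (x, 0), fun y => f (0, y) - f (0, 0), ?_⟩
  intro x1 x2
  have hD2 : ∀ x y : ℝ, asD2 f (x, y) = asD2 f (0, y) + c * x := by
    intro x y
    have hsub := D2_sub hf 0 x y
    have hcongr : (∫ u in (0:ℝ)..x, asH f (u, y)) = ∫ u in (0:ℝ)..x, c := by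
      apply intervalIntegral.integral_congr
      intro u _
      exact step5 hf h (u, y) (0, 0)
    rw [hcongr, intervalIntegral.integral_const, smul_eq_mul] at hsub
    have : asD2 f (x, y) - asD2 f (0, y) = (x - 0) * c := hsub
    linarith [this, mul_comm x c]
  have hfx : f (x1, 0 + x2) - f (x1, 0)
      = ∫ t in (0:ℝ)..1, asD2 f (x1, 0 + x2 * t) * x2 := f_sub' hf x1 0 x2
  have hf0 : f (0, 0 + x2) - f (0, 0)
      = ∫ t in (0:ℝ)..1, asD2 f (0, 0 + x2 * t) * x2 := f_sub' hf 0 0 x2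
  have hsplit : (∫ t in (0:ℝ)..1, asD2 f (x1, 0 + x2 * t) * x2)
      = (∫ t in (0:ℝ)..1, asD2 f (0, 0 + x2 * t) * x2) + c * x1 * x2 := by
    have e : ∀ t : ℝ, asD2 f (x1, 0 + x2 * t) * x2
        = asD2 f (0, 0 + x2 * t) * x2 + c * x1 * x2 := by
      intro t
      rw [hD2 x1 (0 + x2 * t)]
      ring
    rw [intervalIntegral.integral_congr (g := fun t =>
        asD2 f (0, 0 + x2 * t) * x2 + c * x1 * x2) (fun t _ => e t)]
    have i1 : IntervalIntegrable (fun t : ℝ => asD2 f (0, 0 + x2 * t) * x2) volume 0 1 :=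
      (((asD2_continuous hf).comp (continuous_const.prodMk
        (continuous_const.add (continuous_const.mul continuous_id)))).mul
        continuous_const).intervalIntegrable 0 1
    rw [intervalIntegral.integral_add i1 (intervalIntegrable_const)]
    rw [intervalIntegral.integral_const, smul_eq_mul]
    ring
  rw [hsplit, ← hf0] at hfx
  simp only [zero_add] at hfx
  dsimp only
  linarith
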